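/- Every invertible symmetric complex matrix u can be written as u = vᵀ v for some invertible complex matrix v. -/

import Mathlib

open Matrix

theorem stmt2 (n : ℕ) (u : Matrix (Fin n) (Fin n) ℂ) (hu : IsUnit u) (hsymm : uᵀ = u) :
    ∃ v : Matrix (Fin n) (Fin n) ℂ, IsUnit v ∧ u = vᵀ * v := by
  classical
  set B₁ : LinearMap.BilinMap ℂ (Fin n → ℂ) ℂ := Matrix.toLinearMap₂' ℂ u with hB₁
  set B₂ : LinearMap.BilinMap ℂ (Fin n → ℂ) ℂ :=
    Matrix.toLinearMap₂' ℂ (1 : Matrix (Fin n) (Fin n) ℂ) with hB₂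
  have hsymm' : ∀ i j, u j i = u i j := fun i j => by
    exact congrFun (congrFun hsymm i) j
  have hB₁symm : B₁.IsSymm := by
    rw [LinearMap.isSymm_def]; intro x y
    simp only [RingHom.id_apply, hB₁, Matrix.toLinearMap₂'_apply]
    rw [Finset.sum_comm]
    refine Finset.sum_congr rfl fun i _ => Finset.sum_congr rfl fun j _ => ?_
    rw [hsymm' i j]; simp only [smul_eq_mul]; ring
  have hB₂symm : B₂.IsSymm := by
    rw [LinearMap.isSymm_def]; intro x y
    simp only [RingHom.id_apply, hB₂, Matrix.toLinearMap₂'_apply]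
    rw [Finset.sum_comm]
    refine Finset.sum_congr rfl fun i _ => Finset.sum_congr rfl fun j _ => ?_
    rcases eq_or_ne i j with h | h
    · subst h; simp only [smul_eq_mul]; ring
    · simp [Matrix.one_apply_ne h, Matrix.one_apply_ne (Ne.symm h)]
  set Q₁ : QuadraticForm ℂ (Fin n → ℂ) := B₁.toQuadraticMap with hQ₁def
  set Q₂ : QuadraticForm ℂ (Fin n → ℂ) := B₂.toQuadraticMap with hQ₂def
  have ha₁ : QuadraticMap.associated (R := ℂ) Q₁ = B₁ :=
    QuadraticMap.associated_left_inverse ℂ hB₁symm.eq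
  have ha₂ : QuadraticMap.associated (R := ℂ) Q₂ = B₂ :=
    QuadraticMap.associated_left_inverse ℂ hB₂symm.eq
  have hsep₁ : (QuadraticMap.associated (R := ℂ) Q₁).SeparatingLeft := by
    rw [ha₁, hB₁]
    rw [LinearMap.separatingLeft_toLinearMap₂'_iff_det_ne_zero]
    exact (hu.map (Matrix.detMonoidHom)).ne_zero
  have hsep₂ : (QuadraticMap.associated (R := ℂ) Q₂).SeparatingLeft := by
    rw [ha₂, hB₂]
    rw [LinearMap.separatingLeft_toLinearMap₂'_iff_det_ne_zero]
    simp
  obtain ⟨f⟩ := QuadraticForm.complex_equivalent Q₁ Q₂ hsep₁ hsep₂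
  set l : (Fin n → ℂ) →ₗ[ℂ] (Fin n → ℂ) := (f.toLinearEquiv : (Fin n → ℂ) →ₗ[ℂ] (Fin n → ℂ))
  have hcomp : Q₂.comp l = Q₁ := by
    ext x
    exact f.map_app x
  set A : Matrix (Fin n) (Fin n) ℂ := LinearMap.toMatrix' l with hA
  refine ⟨A, ?_, ?_⟩
  · rw [Matrix.isUnit_iff_isUnit_det, hA, LinearMap.det_toMatrix']
    exact f.toLinearEquiv.isUnit_det'
  · have key : QuadraticMap.associated (R := ℂ) Q₁ =
        (QuadraticMap.associated (R := ℂ) Q₂).compl₁₂ l l := by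
      rw [← hcomp, QuadraticMap.associated_comp]
    have := congrArg (LinearMap.toMatrix₂' ℂ) key
    rw [ha₁, ha₂, hB₁, hB₂, LinearMap.toMatrix₂'_compl₁₂] at this
    simpa using this
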